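/- Let (𝐬, r(𝐬)) ∈ 𝒮 be connected with r(𝐬) = (1, r_1, r_2) (so k = 2, r = r_2, r_0 = 1), and let ε ∈ {0,1}. If r_ε + ε ≤ p < r_{1+ε} + ε is such that i_p ≤ i_{r_1+1−2ε} < j_{r_1+1−2ε} ≤ j_p, then i_p ≤ i_s < j_s ≤ j_p for all s with r_{1−ε} − ε < s ≤ r_{2−ε} − ε. -/
import Mathlib


namespace AltSnakePaper

/-- `[i,j] ∈ 𝕀ₙ`: the interval condition `0 ≤ j - i ≤ n + 1`. -/
def InIn (n : ℕ) (i j : ℤ) : Prop := 0 ≤ j - i ∧ j - i ≤ (n : ℤ) + 1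

/-- The intervals `[i1,j1]` and `[i2,j2]` overlap. -/
def Overlap (i1 j1 i2 j2 : ℤ) : Prop :=
  (i1 < i2 ∧ i2 ≤ j1 ∧ j1 < j2) ∨ (i2 < i1 ∧ i1 ≤ j2 ∧ j2 < j1)

/-- The pair `([i1,j1],[i2,j2])` is connected. -/
def ConnPair (n : ℕ) (i1 j1 i2 j2 : ℤ) : Prop :=
  Overlap i1 j1 i2 j2 ∧ InIn n i1 j2 ∧ InIn n i2 j1

/-- The subtuple `𝐬(a,b)` (entries with indices `a+1, …, b`) lies in `S_→`. -/
def SRight (ii jj : ℕ → ℤ) (a b : ℕ) : Prop :=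
  ∀ s, a + 1 ≤ s → s + 1 ≤ b → ii s < ii (s + 1) ∧ jj s < jj (s + 1)

/-- The subtuple `𝐬(a,b)` (entries with indices `a+1, …, b`) lies in `S_←`. -/
def SLeft (ii jj : ℕ → ℤ) (a b : ℕ) : Prop :=
  ∀ s, a + 1 ≤ s → s + 1 ≤ b → ii (s + 1) < ii s ∧ jj (s + 1) < jj s

/-- `(𝐬, r(𝐬))` is an alternating snake, where `𝐬 = ([i_1,j_1],…,[i_r,j_r])`
(encoded by `ii jj : ℕ → ℤ`, entries indexed `1,…,r`) and
`r(𝐬) = (r_0, r_1, …, r_k)` (encoded by `rr : ℕ → ℕ`). -/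
structure IsAltSnake (n r k : ℕ) (rr : ℕ → ℕ) (ii jj : ℕ → ℤ) : Prop where
  hr : 1 ≤ r
  hk : k ≤ r
  mem : ∀ s, 1 ≤ s → s ≤ r → InIn n (ii s) (jj s)
  distinct : ∀ s p, 1 ≤ s → s ≤ r → 1 ≤ p → p ≤ r → s ≠ p → ii s ≠ ii p ∨ jj s ≠ jj p
  rr0 : rr 0 = 1
  rrk : rr k = r
  rrmono : ∀ m, m < k → rr m < rr (m + 1)
  mono : ∀ m, 1 ≤ m → m ≤ k →
      SRight ii jj (rr (m - 1) - 1) (rr m) ∨ SLeft ii jj (rr (m - 1) - 1) (rr m)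
  alt : ∀ m, 1 ≤ m → m < k →
      (SRight ii jj (rr (m - 1) - 1) (rr m) ↔ SLeft ii jj (rr m - 1) (rr (m + 1)))
  nonoverlap : ∀ m s t, 1 ≤ m → m < k → 1 ≤ s → s < rr m → rr m < t → t ≤ r →
      ¬ Overlap (ii s) (jj s) (ii t) (jj t)

/-- The subtuple `𝐬(a,b)` is connected: all consecutive pairs are connected. -/
def SegConnected (n : ℕ) (ii jj : ℕ → ℤ) (a b : ℕ) : Prop :=
  ∀ s, a + 1 ≤ s → s + 1 ≤ b → ConnPair n (ii s) (jj s) (ii (s + 1)) (jj (s + 1))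

/-- The subtuple `𝐬(a,b)` (with its induced r-vector, whose internal break points
are the `rr m` with `a + 1 < rr m < b`) is prime. -/
def SegPrime (n k : ℕ) (rr : ℕ → ℕ) (ii jj : ℕ → ℤ) (a b : ℕ) : Prop :=
  SegConnected n ii jj a b ∧
    ∀ m, 1 ≤ m → m < k → a + 1 < rr m → rr m < b →
      ii (rr m - 1) ≠ ii (rr m + 1) ∧ jj (rr m - 1) ≠ jj (rr m + 1)

/-- The subtuple `𝐬(a,b)` (with its induced r-vector) is stable. -/
def SegStable (k : ℕ) (rr : ℕ → ℕ) (ii jj : ℕ → ℤ) (a b : ℕ) : Prop :=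
  ∀ m, 1 ≤ m → m < k → a + 1 < rr m → rr m < b →
    (ii (rr m + 1) < ii (rr m - 1) → jj (rr m + 1) < ii (rr m - 1)) ∧
    (jj (rr m - 1) < jj (rr m + 1) → jj (rr m - 1) < ii (rr m + 1))

/-- The alternating snake is stable. -/
def Stable (k : ℕ) (rr : ℕ → ℕ) (ii jj : ℕ → ℤ) : Prop :=
  ∀ m, 1 ≤ m → m < k →
    (ii (rr m + 1) < ii (rr m - 1) → jj (rr m + 1) < ii (rr m - 1)) ∧
    (jj (rr m - 1) < jj (rr m + 1) → jj (rr m - 1) < ii (rr m + 1))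

/-- The boundary condition allowing a cut of the snake at `p = rr m - ε`:
`a_{r_m-1} = a_{r_m+1}` for some `a ∈ {i, j}`, with `ε ∈ {0,1}` chosen so that, `b`
denoting the other member of `{i,j}`, one has `b_{r_m−1+2ε} < b_{r_m+1−2ε}` if
`𝐬(r_m−2, r_m) ∈ S_←` and `b_{r_m+1−2ε} < b_{r_m−1+2ε}` if `𝐬(r_m−2, r_m) ∈ S_→`. -/
def BoundaryCond (k : ℕ) (rr : ℕ → ℕ) (ii jj : ℕ → ℤ) (m ε : ℕ) : Prop :=
  (ii (rr m - 1) = ii (rr m + 1) ∧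
    (SLeft ii jj (rr m - 2) (rr m) → jj (rr m - 1 + 2 * ε) < jj (rr m + 1 - 2 * ε)) ∧
    (SRight ii jj (rr m - 2) (rr m) → jj (rr m + 1 - 2 * ε) < jj (rr m - 1 + 2 * ε))) ∨
  (jj (rr m - 1) = jj (rr m + 1) ∧
    (SLeft ii jj (rr m - 2) (rr m) → ii (rr m - 1 + 2 * ε) < ii (rr m + 1 - 2 * ε)) ∧
    (SRight ii jj (rr m - 2) (rr m) → ii (rr m + 1 - 2 * ε) < ii (rr m - 1 + 2 * ε)))

/-- `p` is an admissible cut point for the prime decomposition. -/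
def CutAt (n r k : ℕ) (rr : ℕ → ℕ) (ii jj : ℕ → ℤ) (p : ℕ) : Prop :=
  p = r ∨
  ¬ ConnPair n (ii p) (jj p) (ii (p + 1)) (jj (p + 1)) ∨
  ∃ m ε, 1 ≤ m ∧ m < k ∧ ε ≤ 1 ∧ p = rr m - ε ∧ BoundaryCond k rr ii jj m ε

/-- `0 = c 0 < c 1 < ⋯ < c L = r` are the cut points of a prime decomposition
of the snake, the prime factors being the segments `𝐬(c t, c (t+1))`. -/
def IsPrimeDecomp (n r k : ℕ) (rr : ℕ → ℕ) (ii jj : ℕ → ℤ) (c : ℕ → ℕ) (L : ℕ) : Prop :=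
  1 ≤ L ∧ c 0 = 0 ∧ c L = r ∧ (∀ t, t < L → c t < c (t + 1)) ∧
  (∀ t, t < L → SegPrime n k rr ii jj (c t) (c (t + 1))) ∧
  (∀ t, 1 ≤ t → t ≤ L → CutAt n r k rr ii jj (c t))

/-- The segment `𝐬(a,b)` is contained in a prime factor of `𝐬`. -/
def ContainedInPF (n r k : ℕ) (rr : ℕ → ℕ) (ii jj : ℕ → ℤ) (a b : ℕ) : Prop :=
  ∃ c L t, IsPrimeDecomp n r k rr ii jj c L ∧ t < L ∧ c t ≤ a ∧ b ≤ c (t + 1)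


lemma overlap_nondeg {i1 j1 i2 j2 : ℤ} (h : Overlap i1 j1 i2 j2) : i1 < j1 ∧ i2 < j2 := by
  rcases h with ⟨a, b, c⟩ | ⟨a, b, c⟩ <;> exact ⟨by linarith, by linarith⟩

lemma chain_up (ii jj : ℕ → ℤ) (ip jp : ℤ) (a b : ℕ)
    (hbase : ip ≤ ii a ∧ jj a ≤ jp)
    (hov : ∀ s, a ≤ s → s + 1 ≤ b → Overlap (ii s) (jj s) (ii (s+1)) (jj (s+1)))
    (hno : ∀ t, a < t → t ≤ b → ¬ Overlap ip jp (ii t) (jj t)) :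
    ∀ s, a ≤ s → s ≤ b → ip ≤ ii s ∧ jj s ≤ jp := by
  intro s hs
  induction s, hs using Nat.le_induction with
  | base => intro _; exact hbase
  | succ s hs IH =>
    intro hsb
    have IH' := IH (by omega)
    have ov := hov s hs (by omega)
    have no := hno (s+1) (by omega) (by omega)
    rcases ov with ⟨h1, h2, h3⟩ | ⟨h1, h2, h3⟩
    · refine ⟨by linarith [IH'.1], ?_⟩
      by_contra hlt
      push_neg at hlt
      exact no (Or.inl ⟨by linarith [IH'.1], by linarith [IH'.2], hlt⟩)
    · refine ⟨?_, by linarith [IH'.2]⟩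
      by_contra hlt
      push_neg at hlt
      exact no (Or.inr ⟨hlt, by linarith [IH'.1], by linarith [IH'.2]⟩)

lemma chain_down (ii jj : ℕ → ℤ) (ip jp : ℤ) (a b : ℕ) (hba : b ≤ a)
    (hbase : ip ≤ ii a ∧ jj a ≤ jp)
    (hov : ∀ s, b ≤ s → s + 1 ≤ a → Overlap (ii s) (jj s) (ii (s+1)) (jj (s+1)))
    (hno : ∀ t, b ≤ t → t < a → ¬ Overlap (ii t) (jj t) ip jp) :
    ∀ s, b ≤ s → s ≤ a → ip ≤ ii s ∧ jj s ≤ jp := by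
  have key : ∀ d, d ≤ a - b → ip ≤ ii (a - d) ∧ jj (a - d) ≤ jp := by
    intro d
    induction d with
    | zero => intro _; simpa using hbase
    | succ d IH =>
      intro hd
      have IH' := IH (by omega)
      have heq : a - (d+1) + 1 = a - d := by omega
      have ov := hov (a - (d+1)) (by omega) (by omega)
      have no := hno (a - (d+1)) (by omega) (by omega)
      rw [heq] at ov
      rcases ov with ⟨h1, h2, h3⟩ | ⟨h1, h2, h3⟩
      · refine ⟨?_, by linarith [IH'.2]⟩
        by_contra hlt
        push_neg at hlt
        exact no (Or.inl ⟨hlt, by linarith [IH'.1], by linarith [IH'.2]⟩)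
      · refine ⟨by linarith [IH'.1], ?_⟩
        by_contra hlt
        push_neg at hlt
        exact no (Or.inr ⟨by linarith [IH'.1], by linarith [IH'.2], hlt⟩)
  intro s hbs hsa
  have := key (a - s) (by omega)
  rwa [show a - (a - s) = s from by omega] at this

/-- Proposition (structure1 (ii)): for a connected alternating snake with
`r(𝐬) = (1, r_1, r_2)` and `ε ∈ {0,1}`, if `r_ε + ε ≤ p < r_{1+ε} + ε` satisfies
`i_p ≤ i_{r_1+1−2ε} < j_{r_1+1−2ε} ≤ j_p` then `i_p ≤ i_s < j_s ≤ j_p` for all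
`r_{1−ε} − ε < s ≤ r_{2−ε} − ε`. -/
theorem stmt_8 (n r : ℕ) (hn : 1 ≤ n) (rr : ℕ → ℕ) (ii jj : ℕ → ℤ)
    (h : IsAltSnake n r 2 rr ii jj) (hc : SegConnected n ii jj 0 r)
    (ε : ℕ) (hε : ε ≤ 1) (p : ℕ)
    (hp1 : rr ε + ε ≤ p) (hp2 : p < rr (1 + ε) + ε)
    (hip : ii p ≤ ii (rr 1 + 1 - 2 * ε))
    (hij : ii (rr 1 + 1 - 2 * ε) < jj (rr 1 + 1 - 2 * ε))
    (hjp : jj (rr 1 + 1 - 2 * ε) ≤ jj p) :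
    ∀ s, rr (1 - ε) - ε < s → s ≤ rr (2 - ε) - ε →
      ii p ≤ ii s ∧ ii s < jj s ∧ jj s ≤ jj p := by
  obtain ⟨hr, hk, mem, distinct, rr0, rrk, rrmono, mono, alt, nonov⟩ := h
  have h01 : rr 0 < rr 1 := rrmono 0 (by omega)
  have h12 : rr 1 < rr 2 := rrmono 1 (by omega)
  interval_cases ε
  · -- ε = 0
    simp only [Nat.mul_zero, Nat.sub_zero, Nat.add_zero] at hp1 hp2 hip hjp hij ⊢
    have key := chain_up ii jj (ii p) (jj p) (rr 1 + 1) r ⟨hip, hjp⟩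
      (fun s hs hsb => (hc s (by omega) (by omega)).1)
      (fun t ht htb => nonov 1 p t le_rfl (by omega) (by omega) (by omega) (by omega) htb)
    intro s hs1 hs2
    have hs2' : s ≤ r := by omega
    have hks := key s (by omega) hs2'
    have hlt : ii s < jj s := by
      have := (overlap_nondeg (hc (s-1) (by omega) (by omega)).1).2
      rwa [show s - 1 + 1 = s from by omega] at this
    exact ⟨hks.1, hlt, hks.2⟩
  · -- ε = 1
    norm_num at hp1 hp2 ⊢
    rw [show rr 1 + 1 - 2 * 1 = rr 1 - 1 from by omega] at hip hjp hij
    have key := chain_down ii jj (ii p) (jj p) (rr 1 - 1) 1 (by omega) ⟨hip, hjp⟩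
      (fun s hs hsb => (hc s (by omega) (by omega)).1)
      (fun t ht htb => nonov 1 t p le_rfl (by omega) ht (by omega) (by omega) (by omega))
    intro s hs1 hs2
    have hs1' : 1 ≤ s := by omega
    have hs2' : s ≤ rr 1 - 1 := by omega
    have hks := key s hs1' hs2'
    have hlt : ii s < jj s :=
      (overlap_nondeg (hc s (by omega) (by omega)).1).1
    exact ⟨hks.1, hlt, hks.2⟩

end AltSnakePaper
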